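/- Let M and N be monomials in K[x_1,…,x_n] and k ≥ 1 an integer. Then N factors as N = M_1⋯M_k with M_1,…,M_k ∈ Borel(M) if and only if N ∈ Borel(M^k). -/

import Mathlib

/-- A Borel move: `m'` is obtained from `m` by replacing one factor `x_j` by `x_i` with
`i < j` (variables are indexed so that `x_i` corresponds to `i : Fin n`). -/
def BorelStep (n : ℕ) (m m' : Fin n →₀ ℕ) : Prop :=
  ∃ i j : Fin n, i < j ∧ 0 < m j ∧ m' + Finsupp.single j 1 = m + Finsupp.single i 1

/-- `Borel(M)`: the set of monomials (exponent vectors) obtainable from `M` by finite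
sequences of Borel moves, including `M` itself. -/
def BorelSet (n : ℕ) (M : Fin n →₀ ℕ) : Set (Fin n →₀ ℕ) :=
  {m | Relation.ReflTransGen (BorelStep n) M m}

lemma BorelStep.add_right {n : ℕ} {m m' : Fin n →₀ ℕ} (c : Fin n →₀ ℕ)
    (h : BorelStep n m m') : BorelStep n (m + c) (m' + c) := by
  obtain ⟨i, j, hij, hj, heq⟩ := h
  refine ⟨i, j, hij, ?_, ?_⟩
  · simp only [Finsupp.add_apply]; omega
  · rw [add_right_comm, heq, add_right_comm]

lemma rtg_add {n : ℕ} {a b c d : Fin n →₀ ℕ}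
    (h1 : Relation.ReflTransGen (BorelStep n) a b)
    (h2 : Relation.ReflTransGen (BorelStep n) c d) :
    Relation.ReflTransGen (BorelStep n) (a + c) (b + d) := by
  have hl : Relation.ReflTransGen (BorelStep n) (a + c) (b + c) :=
    Relation.ReflTransGen.lift (p := BorelStep n) (· + c) (fun _ _ h => h.add_right c) _ _ h1
  have hr : Relation.ReflTransGen (BorelStep n) (b + c) (b + d) := by
    have := Relation.ReflTransGen.lift (p := BorelStep n) (· + b) (fun _ _ h => h.add_right b) _ _ h2
    simpa [add_comm] using this
  exact hl.trans hr

/-- Lemma 3.9: a monomial `N` factors as a product `M_1 ⋯ M_k` with all `M_ℓ ∈ Borel(M)`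
iff `N ∈ Borel(M^k)`.  (Products of monomials correspond to sums of exponent vectors,
and `M^k` corresponds to `k • M`.) -/
theorem borel_factorization_iff {n : ℕ} (M N : Fin n →₀ ℕ) (k : ℕ) (hk : 1 ≤ k) :
    (∃ f : Fin k → (Fin n →₀ ℕ), (∀ ℓ : Fin k, f ℓ ∈ BorelSet n M) ∧ ∑ ℓ, f ℓ = N) ↔
      N ∈ BorelSet n (k • M) := by
  constructor
  · rintro ⟨f, hf, rfl⟩
    have key : ∀ s : Finset (Fin k),
        Relation.ReflTransGen (BorelStep n) (∑ _ℓ ∈ s, M) (∑ ℓ ∈ s, f ℓ) := by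
      intro s
      induction s using Finset.induction_on with
      | empty => simpa using Relation.ReflTransGen.refl
      | insert _ _ hx ih =>
        rw [Finset.sum_insert hx, Finset.sum_insert hx]
        exact rtg_add (hf _) ih
    have := key Finset.univ
    simpa [BorelSet, Finset.sum_const, Finset.card_univ] using this
  · intro hN
    have h : Relation.ReflTransGen (BorelStep n) (k • M) N := hN
    clear hN hk
    induction h with
    | refl =>
      refine ⟨fun _ => M, fun _ => Relation.ReflTransGen.refl, ?_⟩
      simp [Finset.sum_const, Finset.card_univ]
    | tail hab hbc ih =>
      rename_i c
      obtain ⟨f, hf, rfl⟩ := ih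
      obtain ⟨i, j, hij, hj, heq⟩ := hbc
      obtain ⟨ℓ₀, hℓ₀⟩ : ∃ ℓ, 0 < f ℓ j := by
        by_contra hcon
        push_neg at hcon
        simp only [Nat.le_zero] at hcon
        rw [Finsupp.finset_sum_apply] at hj
        simp [hcon] at hj
      set v := f ℓ₀ + Finsupp.single i 1 - Finsupp.single j 1 with hvdef
      have hv : v + Finsupp.single j 1 = f ℓ₀ + Finsupp.single i 1 := by
        ext x
        simp only [hvdef, Finsupp.add_apply, Finsupp.tsub_apply, Finsupp.single_apply]
        rcases eq_or_ne j x with rfl | hx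
        · have hne : i ≠ j := hij.ne
          rw [if_pos rfl, if_neg hne]
          omega
        · simp [hx]
      have hstep : BorelStep n (f ℓ₀) v := ⟨i, j, hij, hℓ₀, hv⟩
      refine ⟨Function.update f ℓ₀ v, ?_, ?_⟩
      · intro ℓ
        rcases eq_or_ne ℓ ℓ₀ with rfl | hne
        · simpa [BorelSet] using (hf ℓ).tail hstep
        · simpa [Function.update_of_ne hne] using hf ℓ
      · have hsplit : ∑ ℓ, f ℓ = f ℓ₀ + ∑ ℓ ∈ Finset.univ \ {ℓ₀}, f ℓ :=
          Finset.sum_eq_add_sum_sdiff_singleton_of_mem (Finset.mem_univ ℓ₀) f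
        have hcancel : c + Finsupp.single j 1 =
            (v + ∑ ℓ ∈ Finset.univ \ {ℓ₀}, f ℓ) + Finsupp.single j 1 := by
          rw [heq, hsplit, add_right_comm, ← hv]
          abel
        have hc := add_right_cancel hcancel
        rw [Finset.sum_update_of_mem (Finset.mem_univ ℓ₀)]
        exact hc.symm
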